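/- Converse of the contraction normal form: let K and C be finite-dimensional normed spaces, X a Banach space, U ⊆ K × X an open neighborhood of (0,0), and f : U → C × X a C¹ map with f(0,0) = (0,0); write f(k,x) = (f₁(k,x), f₂(k,x)) and B(k,x) = x − f₂(k,x). Assume there exist Θ ∈ (0,1) and ε > 0 such that ‖B(k,x) − B(k,x')‖ ≤ Θ‖x − x'‖ for all k ∈ K, x, x' ∈ X with ‖k‖ < ε, ‖x‖ < ε, ‖x'‖ < ε. Then the derivative Df(0,0) : K × X → C × X is a Fredholm operator. -/

import Mathlib

/-- A bounded linear operator between Banach spaces is Fredholm if its kernel is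
finite-dimensional and its range is closed and of finite codimension. -/
def IsFredholmOperator {E F : Type*}
    [NormedAddCommGroup E] [NormedSpace ℝ E] [NormedAddCommGroup F] [NormedSpace ℝ F]
    (T : E →L[ℝ] F) : Prop :=
  FiniteDimensional ℝ (LinearMap.ker (T : E →ₗ[ℝ] F)) ∧
  IsClosed (LinearMap.range (T : E →ₗ[ℝ] F) : Set F) ∧
  FiniteDimensional ℝ (F ⧸ LinearMap.range (T : E →ₗ[ℝ] F))

/-- converse of the contraction normal form.  Let `K`, `C` be
finite-dimensional normed spaces, `X` a Banach space, `U` an open neighborhood of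
`(0,0)` in `K × X`, and `f : U → C × X` a `C¹` map with `f(0,0) = (0,0)`.  If
`B(k,x) = x - f₂(k,x)` satisfies a uniform contraction estimate in `x` near `0`,
then the derivative `Df(0,0)` is a Fredholm operator. -/
theorem fredholm_of_contraction_normal_form {K C X : Type*}
    [NormedAddCommGroup K] [NormedSpace ℝ K] [FiniteDimensional ℝ K]
    [NormedAddCommGroup C] [NormedSpace ℝ C] [FiniteDimensional ℝ C]
    [NormedAddCommGroup X] [NormedSpace ℝ X] [CompleteSpace X]
    (U : Set (K × X)) (hU : IsOpen U) (h0U : ((0 : K), (0 : X)) ∈ U)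
    (f : K × X → C × X) (hf : ContDiffOn ℝ 1 f U) (hf0 : f (0, 0) = (0, 0))
    (D : (K × X) →L[ℝ] (C × X)) (hD : HasFDerivAt f D (0, 0))
    (Θ ε : ℝ) (hΘ : Θ ∈ Set.Ioo (0:ℝ) 1) (hε : 0 < ε)
    (hcontr : ∀ (k : K) (x x' : X), ‖k‖ < ε → ‖x‖ < ε → ‖x'‖ < ε →
      ‖(x - (f (k, x)).2) - (x' - (f (k, x')).2)‖ ≤ Θ * ‖x - x'‖) :
    IsFredholmOperator D := by
  -- components of D
  set a : K →L[ℝ] C := (ContinuousLinearMap.fst ℝ C X).comp (D.comp (ContinuousLinearMap.inl ℝ K X)) with ha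
  set b : X →L[ℝ] C := (ContinuousLinearMap.fst ℝ C X).comp (D.comp (ContinuousLinearMap.inr ℝ K X)) with hb
  set c : K →L[ℝ] X := (ContinuousLinearMap.snd ℝ C X).comp (D.comp (ContinuousLinearMap.inl ℝ K X)) with hc
  set A : X →L[ℝ] X := (ContinuousLinearMap.snd ℝ C X).comp (D.comp (ContinuousLinearMap.inr ℝ K X)) with hA
  have hD' : ∀ (k : K) (x : X), D (k, x) = (a k + b x, c k + A x) := by
    intro k x
    have h1 : ((k, x) : K × X) = (k, 0) + (0, x) := by simp
    rw [h1, map_add]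
    rfl
  -- derivative of the contracting map
  have hg : HasFDerivAt (fun x : X => x - (f (0, x)).2)
      (ContinuousLinearMap.id ℝ X - A) 0 := by
    have hinr : HasFDerivAt (fun x : X => ((0 : K), x)) (ContinuousLinearMap.inr ℝ K X) 0 :=
      (ContinuousLinearMap.inr ℝ K X).hasFDerivAt
    have h1 : HasFDerivAt (fun x : X => f (0, x))
        (D.comp (ContinuousLinearMap.inr ℝ K X)) 0 := hD.comp 0 hinr
    have h2 : HasFDerivAt (fun x : X => (f (0, x)).2) A 0 :=
      (ContinuousLinearMap.snd ℝ C X).hasFDerivAt.comp 0 h1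
    exact (hasFDerivAt_id 0).sub h2
  -- norm bound from the Lipschitz estimate
  have hlip : LipschitzOnWith ⟨Θ, hΘ.1.le⟩ (fun x : X => x - (f (0, x)).2) (Metric.ball 0 ε) := by
    apply LipschitzOnWith.of_dist_le_mul
    intro x hx y hy
    simp only [Metric.mem_ball, dist_zero_right] at hx hy
    rw [dist_eq_norm, dist_eq_norm]; exact hcontr 0 x y (by simpa using hε) hx hy
  have hnorm : ‖ContinuousLinearMap.id ℝ X - A‖ ≤ Θ :=
    hg.le_of_lipschitzOn (Metric.ball_mem_nhds 0 hε) hlip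
  have hlt : ‖(1 : X →L[ℝ] X) - A‖ < 1 := by
    rw [ContinuousLinearMap.one_def]
    exact lt_of_le_of_lt hnorm hΘ.2
  set u : (X →L[ℝ] X)ˣ := Units.oneSub ((1 : X →L[ℝ] X) - A) hlt with hu
  have huA : (u : X →L[ℝ] X) = A := by
    simp [hu, Units.oneSub, sub_sub_cancel]
  set Ainv : X →L[ℝ] X := ((u⁻¹ : (X →L[ℝ] X)ˣ) : X →L[ℝ] X) with hAinv
  have hAAinv : ∀ z : X, A (Ainv z) = z := by
    intro z
    have h := u.mul_inv
    rw [huA] at h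
    calc A (Ainv z) = (A * Ainv) z := rfl
      _ = (1 : X →L[ℝ] X) z := by rw [h]
      _ = z := rfl
  have hAinvA : ∀ z : X, Ainv (A z) = z := by
    intro z
    have h := u.inv_mul
    rw [huA] at h
    calc Ainv (A z) = (Ainv * A) z := rfl
      _ = (1 : X →L[ℝ] X) z := by rw [h]
      _ = z := rfl
  have hAinj : ∀ x : X, A x = 0 → x = 0 := by
    intro x hx
    have := hAinvA x
    rw [hx, map_zero] at this
    exact this.symm
  refine ⟨?_, ?_, ?_⟩
  · -- kernel finite-dimensional
    let φ : LinearMap.ker (D : K × X →ₗ[ℝ] C × X) →ₗ[ℝ] K := (LinearMap.fst ℝ K X).comp (LinearMap.ker (D : K × X →ₗ[ℝ] C × X)).subtype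
    have hφ : Function.Injective φ := by
      rw [← LinearMap.ker_eq_bot, LinearMap.ker_eq_bot']
      rintro ⟨⟨k, x⟩, hw⟩ hk
      have hk0 : k = 0 := by simpa [φ] using hk
      have hw' : D (k, x) = 0 := hw
      rw [hk0, hD'] at hw'
      simp only [map_zero, zero_add] at hw'
      have hx : A x = 0 := congrArg Prod.snd hw'
      have hx0 : x = 0 := hAinj x hx
      ext <;> simp [hk0, hx0]
    exact FiniteDimensional.of_injective φ hφ
  · -- range closed
    set Ψ : (C × X) →L[ℝ] C :=
      (ContinuousLinearMap.fst ℝ C X) - b.comp (Ainv.comp (ContinuousLinearMap.snd ℝ C X)) with hΨ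
    have hΨ' : ∀ (y : C) (z : X), Ψ (y, z) = y - b (Ainv z) := by
      intro y z; rfl
    set N : (K × X) →L[ℝ] C := Ψ.comp D with hN
    have hrange : (LinearMap.range (D : K × X →ₗ[ℝ] C × X) : Set (C × X)) = Ψ ⁻¹' (LinearMap.range (N : K × X →ₗ[ℝ] C) : Set C) := by
      ext ⟨y, z⟩
      constructor
      · rintro ⟨w, hw⟩
        exact ⟨w, congrArg Ψ hw⟩
      · rintro ⟨⟨k, x₀⟩, hNk⟩
        refine ⟨(k, Ainv (z - c k)), ?_⟩
        have hNval : N (k, x₀) = a k - b (Ainv (c k)) := by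
          show Ψ (D (k, x₀)) = _
          rw [hD' k x₀, hΨ', map_add Ainv, hAinvA, map_add b]
          abel
        rw [ContinuousLinearMap.coe_coe, hNval, hΨ'] at hNk
        rw [ContinuousLinearMap.coe_coe, hD']
        have hsnd : c k + A (Ainv (z - c k)) = z := by rw [hAAinv]; abel
        have hfst : a k + b (Ainv (z - c k)) = y := by
          rw [map_sub Ainv, map_sub b]
          have : y = a k - b (Ainv (c k)) + b (Ainv z) := by rw [hNk]; abel
          rw [this]; abel
        rw [hfst, hsnd]
    rw [hrange]
    exact ((LinearMap.range (N : K × X →ₗ[ℝ] C)).closed_of_finiteDimensional).preimage Ψ.continuous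
  · -- quotient finite-dimensional
    let ψ : C →ₗ[ℝ] ((C × X) ⧸ LinearMap.range (D : K × X →ₗ[ℝ] C × X)) :=
      (LinearMap.range (D : K × X →ₗ[ℝ] C × X)).mkQ.comp (LinearMap.inl ℝ C X)
    have hψ : Function.Surjective ψ := by
      intro q
      obtain ⟨⟨y, z⟩, rfl⟩ := (LinearMap.range (D : K × X →ₗ[ℝ] C × X)).mkQ_surjective q
      refine ⟨y - b (Ainv z), ?_⟩
      show Submodule.Quotient.mk _ = Submodule.Quotient.mk _
      rw [Submodule.Quotient.eq]
      refine ⟨(0, -Ainv z), ?_⟩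
      rw [ContinuousLinearMap.coe_coe, hD']
      have h1 : A (-Ainv z) = -z := by rw [map_neg, hAAinv]
      have h2 : b (-Ainv z) = -b (Ainv z) := by rw [map_neg]
      ext <;> simp [h1, h2]
    exact Module.Finite.of_surjective ψ hψ
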